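/- Let L be a linear subspace of End(ℂ^D) with L^j = End(ℂ^D) for some j, and suppose B ∈ L satisfies Bv = v for a nonzero vector v ∈ ℂ^D. Then L^D · v = ℂ^D, i.e., every vector w ∈ ℂ^D can be written as Wv with W ∈ L^D. -/

import Mathlib

theorem stmt7 (D : ℕ) (L : Submodule ℂ (Matrix (Fin D) (Fin D) ℂ))
    (hL : ∃ j ≥ 1, L ^ j = ⊤)
    (B : Matrix (Fin D) (Fin D) ℂ) (hB : B ∈ L)
    (v : Fin D → ℂ) (hv : v ≠ 0) (hBv : B.mulVec v = v) :
    ∀ w : Fin D → ℂ, ∃ W ∈ L ^ D, W.mulVec v = w := by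
  classical
  obtain ⟨j, hj1, hjtop⟩ := hL
  -- the linear map A ↦ A v
  set f : Matrix (Fin D) (Fin D) ℂ →ₗ[ℂ] (Fin D → ℂ) :=
    { toFun := fun A => A.mulVec v
      map_add' := fun A A' => Matrix.add_mulVec A A' v
      map_smul' := fun c A => Matrix.smul_mulVec c A v } with hf
  have hfapp : ∀ A, f A = A.mulVec v := fun A => rfl
  set V : ℕ → Submodule ℂ (Fin D → ℂ) := fun k => Submodule.map f (L ^ k) with hV
  -- f is surjective
  have hfsurj : Function.Surjective f := by
    intro w
    obtain ⟨i, hi⟩ : ∃ i, v i ≠ 0 := by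
      by_contra h
      push_neg at h
      exact hv (funext h)
    refine ⟨Matrix.of fun a b => if b = i then w a / v i else 0, ?_⟩
    funext a
    simp only [hfapp, Matrix.mulVec, dotProduct, Matrix.of_apply]
    rw [Finset.sum_eq_single i]
    · simp only [if_true]; field_simp
    · intro b _ hb; simp [hb]
    · simp
  -- step monotonicity
  have hstep : ∀ k, V k ≤ V (k + 1) := by
    intro k
    rintro _ ⟨A, hA, rfl⟩
    refine ⟨A * B, ?_, ?_⟩
    · rw [pow_succ]; exact Submodule.mul_mem_mul hA hB
    · simp only [hfapp]
      rw [← Matrix.mulVec_mulVec, hBv]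
  have hmono : ∀ k m, k ≤ m → V k ≤ V m := by
    intro k m hkm
    induction m with
    | zero => simp_all
    | succ n ih =>
      rcases Nat.lt_or_ge k (n+1) with h | h
      · exact le_trans (ih (Nat.lt_succ_iff.mp h)) (hstep n)
      · have : k = n + 1 := le_antisymm hkm h
        subst this; exact le_rfl
  -- V j = ⊤
  have htopj : V j = ⊤ := by
    rw [hV]
    simp only [hjtop, Submodule.map_top]
    exact LinearMap.range_eq_top.mpr hfsurj
  -- stabilization step
  have hnext : ∀ k, V (k + 1) = V k → V (k + 2) = V (k + 1) := by
    intro k hk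
    refine le_antisymm ?_ (hstep _)
    rintro _ ⟨z, hz, rfl⟩
    rw [show k + 2 = (k + 1) + 1 from rfl, pow_succ'] at hz
    refine Submodule.mul_induction_on hz ?_ ?_
    · intro x hx y hy
      have : f y ∈ V k := hk ▸ ⟨y, hy, rfl⟩
      obtain ⟨y', hy', hyy'⟩ := this
      refine ⟨x * y', ?_, ?_⟩
      · rw [pow_succ']; exact Submodule.mul_mem_mul hx hy'
      · simp only [hfapp] at hyy' ⊢
        rw [← Matrix.mulVec_mulVec, hyy', Matrix.mulVec_mulVec]
    · intro x y hx hy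
      rw [map_add]
      exact Submodule.add_mem _ hx hy
  have hsucc : ∀ k, V (k + 1) = V k → ∀ m, V (k + m + 1) = V (k + m) := by
    intro k hk m
    induction m with
    | zero => exact hk
    | succ n ih => exact hnext (k + n) ih
  have hconst : ∀ k, V (k + 1) = V k → ∀ m, V (k + m) = V k := by
    intro k hk m
    induction m with
    | zero => rfl
    | succ n ih => rw [show k + (n+1) = k + n + 1 from rfl, hsucc k hk n, ih]
  -- growth
  have hgrow : ∀ k, 1 ≤ k → V k = ⊤ ∨ k ≤ Module.finrank ℂ (V k) := by
    intro k hk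
    induction k with
    | zero => omega
    | succ n ih =>
      rcases Nat.eq_zero_or_pos n with h0 | h0
      · subst h0
        right
        have hvmem : v ∈ V 1 := by
          refine ⟨B, by simpa using hB, ?_⟩
          simpa [hfapp] using hBv
        have hne : V 1 ≠ ⊥ := by
          intro h
          rw [h] at hvmem
          exact hv (by simpa using hvmem)
        simpa using hne
      · rcases ih h0 with htop | hrank
        · left
          exact top_unique (htop ▸ hstep n)
        · by_cases heq : V (n + 1) = V n
          · left
            have h1 : V (n + max j n) = V n := hconst n heq (max j n)
            have h2 : V j ≤ V (n + max j n) := hmono j _ (le_trans (le_max_left j n) (Nat.le_add_left _ n))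
            have : V n = ⊤ := top_unique (h1 ▸ (htopj ▸ h2))
            exact top_unique (this ▸ hstep n)
          · right
            have hlt : V n < V (n + 1) := lt_of_le_of_ne (hstep n) (Ne.symm heq)
            have := Submodule.finrank_lt_finrank_of_lt hlt
            omega
  -- D ≥ 1
  have hD : 1 ≤ D := by
    rcases Nat.eq_zero_or_pos D with h0 | h0
    · exfalso
      apply hv
      funext i
      exact absurd i.isLt (by omega)
    · exact h0
  have hVD : V D = ⊤ := by
    rcases hgrow D hD with h | h
    · exact h
    · have hle : Module.finrank ℂ (V D) ≤ D := by
        have := Submodule.finrank_le (V D)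
        simpa using this
      have : Module.finrank ℂ (V D) = D := le_antisymm hle h
      exact Submodule.eq_top_of_finrank_eq (by simpa using this)
  intro w
  have : w ∈ V D := hVD ▸ Submodule.mem_top
  obtain ⟨W, hW, hWv⟩ := this
  exact ⟨W, hW, hWv⟩
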